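/- Let S be a summary of G given by a partition {V_1,...,V_k} of V with all the stated nondegeneracy conditions (n_a, n_b ≥ 1, and every block containing an internal edge has size ≥ 2, and n_a + n_b ≥ 2), and let S^{a,b} be the summary obtained from S by replacing the two blocks V_a and V_b with their union V_a ∪ V_b. Then RE(G|S) − RE(G|S^{a,b}) = −4e_a²/C(n_a,2) − Σ_{i≠a} 4e_{ai}²/(n_a n_i) + 4e_{ab}²/(n_a n_b) − 4e_b²/C(n_b,2) − Σ_{i≠b} 4e_{bi}²/(n_b n_i) + 4(e_a + e_b + e_{ab})²/C(n_a+n_b,2) + (4/(n_a+n_b))·Σ_{i≠a,b} ( e_{ai}²/n_i + e_{bi}²/n_i + 2·e_{ai}·e_{bi}/n_i ), where terms of the form e²/C(m,2) with C(m,2) = 0 are interpreted as 0 (in that case e = 0). -/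

import Mathlib

/-!
Setting: `A : V → V → ℝ` is the (symmetric, 0/1-valued, zero-diagonal) adjacency matrix
of a finite simple undirected graph `G = (V,E)`, and `P : V → Fin k` assigns each vertex
to its block of the partition `{V_1, …, V_k}`.  Merging the blocks `V_a` and `V_b` into
`V_a ∪ V_b` corresponds to the assignment `fun v => if P v = b then a else P v`
(which sends every vertex of `V_b` to the block `a`; the now-empty block `b` carries no
vertices, so it contributes nothing to `Ā` or to `RE`).
-/

open Finset

/-- `n_i`: the number of vertices in block `i`. -/
def blockCard {V : Type*} [Fintype V] {k : ℕ} (P : V → Fin k) (i : Fin k) : ℕ :=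
  (Finset.univ.filter fun v => P v = i).card

/-- `e_i`: the number of edges of `G` with both endpoints in block `i`. -/
noncomputable def eIn {V : Type*} [Fintype V] {k : ℕ} (A : V → V → ℝ) (P : V → Fin k)
    (i : Fin k) : ℝ :=
  (∑ u ∈ Finset.univ.filter (fun v => P v = i),
      ∑ v ∈ Finset.univ.filter (fun v => P v = i), A u v) / 2

/-- `e_{ij}`: the number of edges of `G` between block `i` and block `j` (for `i ≠ j`). -/
noncomputable def eCross {V : Type*} [Fintype V] {k : ℕ} (A : V → V → ℝ) (P : V → Fin k)
    (i j : Fin k) : ℝ :=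
  ∑ u ∈ Finset.univ.filter (fun v => P v = i),
    ∑ v ∈ Finset.univ.filter (fun v => P v = j), A u v

/-- The expected adjacency matrix `Ā` of the summary determined by `P`. -/
noncomputable def Abar {V : Type*} [Fintype V] [DecidableEq V] {k : ℕ}
    (A : V → V → ℝ) (P : V → Fin k) (u v : V) : ℝ :=
  if u = v then 0
  else if P u = P v then eIn A P (P u) / ((blockCard P (P u)).choose 2 : ℝ)
  else eCross A P (P u) (P v) / ((blockCard P (P u) : ℝ) * (blockCard P (P v) : ℝ))

/-- The `l₁`-reconstruction error `RE(G|S) = Σ_u Σ_v |Ā(u,v) − A(u,v)|`. -/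
noncomputable def RE {V : Type*} [Fintype V] [DecidableEq V] {k : ℕ}
    (A : V → V → ℝ) (P : V → Fin k) : ℝ :=
  ∑ u : V, ∑ v : V, |Abar A P u v - A u v|

open Finset


lemma myChooseTwo (n : ℕ) : ((n.choose 2 : ℕ) : ℝ) * 2 = n * ((n:ℝ) - 1) := by
  induction n with
  | zero => simp
  | succ m ih =>
    rw [Nat.choose_succ_succ, Nat.choose_one_right]
    push_cast
    push_cast at ih
    ring_nf
    ring_nf at ih
    linarith

lemma myAbs (c x : ℝ) (hc0 : 0 ≤ c) (hc1 : c ≤ 1) (hx : x = 0 ∨ x = 1) :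
    |c - x| = x + c - 2*c*x := by
  rcases hx with h | h <;> subst h
  · simp [abs_of_nonneg hc0]
  · rw [abs_of_nonpos (by linarith)]; ring

set_option linter.unusedSectionVars false
section
variable {V : Type*} [Fintype V] [DecidableEq V] {k : ℕ}
variable (A : V → V → ℝ) (P : V → Fin k)

lemma eIn_nonneg (h01 : ∀ u v, A u v = 0 ∨ A u v = 1) (i : Fin k) : 0 ≤ eIn A P i := by
  have : (0:ℝ) ≤ ∑ u ∈ Finset.univ.filter (fun v => P v = i),
      ∑ v ∈ Finset.univ.filter (fun v => P v = i), A u v := by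
    apply Finset.sum_nonneg; intro u _; apply Finset.sum_nonneg; intro v _
    rcases h01 u v with h | h <;> simp [h]
  unfold eIn; linarith

lemma eCross_nonneg (h01 : ∀ u v, A u v = 0 ∨ A u v = 1) (i j : Fin k) :
    0 ≤ eCross A P i j := by
  apply Finset.sum_nonneg; intro u _; apply Finset.sum_nonneg; intro v _
  rcases h01 u v with h | h <;> simp [h]

lemma eCross_symm (hsym : ∀ u v, A u v = A v u) (i j : Fin k) :
    eCross A P i j = eCross A P j i := by
  unfold eCross
  rw [Finset.sum_comm]
  exact Finset.sum_congr rfl fun u _ => Finset.sum_congr rfl fun v _ => hsym v u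

lemma eCross_le (h01 : ∀ u v, A u v = 0 ∨ A u v = 1) (i j : Fin k) :
    eCross A P i j ≤ (blockCard P i : ℝ) * (blockCard P j : ℝ) := by
  unfold eCross blockCard
  calc (∑ u ∈ Finset.univ.filter (fun v => P v = i),
      ∑ v ∈ Finset.univ.filter (fun v => P v = j), A u v)
      ≤ ∑ u ∈ Finset.univ.filter (fun v => P v = i),
        ∑ v ∈ Finset.univ.filter (fun v => P v = j), (1:ℝ) := by
        apply Finset.sum_le_sum; intro u _; apply Finset.sum_le_sum; intro v _
        rcases h01 u v with h | h <;> simp [h]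
    _ = _ := by simp [mul_comm]

lemma eIn_le (h01 : ∀ u v, A u v = 0 ∨ A u v = 1) (hdiag : ∀ u, A u u = 0) (i : Fin k) :
    eIn A P i * 2 ≤ (blockCard P i : ℝ) * ((blockCard P i : ℝ) - 1) := by
  unfold eIn blockCard
  rw [div_mul_cancel₀ _ (two_ne_zero)]
  set B := Finset.univ.filter (fun v => P v = i) with hB
  calc (∑ u ∈ B, ∑ v ∈ B, A u v)
      ≤ ∑ u ∈ B, ∑ v ∈ B, (if u = v then (0:ℝ) else 1) := by
        apply Finset.sum_le_sum; intro u _; apply Finset.sum_le_sum; intro v _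
        by_cases h : u = v
        · subst h; simp [hdiag u]
        · rcases h01 u v with h' | h' <;> simp [h, h']
    _ = ∑ u ∈ B, ((B.card : ℝ) - 1) := by
        apply Finset.sum_congr rfl; intro u hu
        have : ∀ v ∈ B, (if u = v then (0:ℝ) else 1) = 1 - (if u = v then 1 else 0) := by
          intros v _; split <;> ring
        rw [Finset.sum_congr rfl this, Finset.sum_sub_distrib, Finset.sum_const,
          Finset.sum_ite_eq B u (fun _ => (1:ℝ))]
        simp [hu]
    _ = (B.card : ℝ) * ((B.card : ℝ) - 1) := by simp [Finset.sum_const, mul_comm]; ring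


lemma sum_block_A (i : Fin k) :
    (∑ u ∈ Finset.univ.filter (fun v => P v = i),
      ∑ v ∈ Finset.univ.filter (fun v => P v = i), A u v) = 2 * eIn A P i := by
  unfold eIn; ring

lemma diag_block (h01 : ∀ u v, A u v = 0 ∨ A u v = 1) (hdiag : ∀ u, A u u = 0) (i : Fin k) :
    (∑ u ∈ Finset.univ.filter (fun v => P v = i),
      ∑ v ∈ Finset.univ.filter (fun v => P v = i), |Abar A P u v - A u v|)
    = 4 * eIn A P i - 4 * (eIn A P i) ^ 2 / ((blockCard P i).choose 2 : ℝ) := by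
  set B := Finset.univ.filter (fun v => P v = i) with hB
  have hn : blockCard P i = B.card := rfl
  by_cases h2 : 2 ≤ B.card
  · -- main case
    have hCpos : (0:ℝ) < ((blockCard P i).choose 2 : ℝ) := by
      rw [hn]; exact_mod_cast Nat.choose_pos h2
    set C := ((blockCard P i).choose 2 : ℝ) with hCdef
    set c := eIn A P i / C with hcdef
    have hC2 : C * 2 = (B.card : ℝ) * ((B.card:ℝ) - 1) := by
      rw [hCdef, hn]; exact myChooseTwo B.card
    have hc0 : 0 ≤ c := div_nonneg (eIn_nonneg A P h01 i) hCpos.le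
    have hc1 : c ≤ 1 := by
      rw [hcdef, div_le_one hCpos]
      have := eIn_le A P h01 hdiag i
      rw [hn] at this; nlinarith
    have key : ∀ u ∈ B, ∀ v ∈ B,
        |Abar A P u v - A u v| = A u v + c - 2*c*A u v - (if u = v then c else 0) := by
      intro u hu v hv
      have hu' : P u = i := (Finset.mem_filter.mp hu).2
      have hv' : P v = i := (Finset.mem_filter.mp hv).2
      by_cases h : u = v
      · subst h; simp [Abar, hdiag u]
      · have : Abar A P u v = c := by
          unfold Abar; rw [if_neg h, hu', hv', if_pos rfl]
        rw [this, if_neg h, myAbs c (A u v) hc0 hc1 (h01 u v)]; ring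
    have s1 : ∀ u ∈ B, ∑ v ∈ B, (A u v + c - 2*c*A u v - (if u = v then c else 0))
        = (∑ v ∈ B, A u v) + (B.card:ℝ) * c - 2*c*(∑ v ∈ B, A u v) - c := by
      intro u hu
      rw [Finset.sum_sub_distrib, Finset.sum_sub_distrib, Finset.sum_add_distrib,
        Finset.sum_const, ← Finset.mul_sum, Finset.sum_ite_eq B u (fun _ => c), if_pos hu]
      push_cast; ring
    have T2 : ∑ u ∈ B, ∑ v ∈ B, A u v = 2 * eIn A P i := sum_block_A A P i
    calc ∑ u ∈ B, ∑ v ∈ B, |Abar A P u v - A u v|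
        = ∑ u ∈ B, ((∑ v ∈ B, A u v) + (B.card:ℝ) * c - 2*c*(∑ v ∈ B, A u v) - c) := by
          refine Finset.sum_congr rfl fun u hu => ?_
          rw [Finset.sum_congr rfl (key u hu), s1 u hu]
      _ = (∑ u ∈ B, ∑ v ∈ B, A u v) + (B.card:ℝ)*((B.card:ℝ) * c)
            - 2*c*(∑ u ∈ B, ∑ v ∈ B, A u v) - (B.card:ℝ)*c := by
          rw [Finset.sum_sub_distrib, Finset.sum_sub_distrib, Finset.sum_add_distrib,
            Finset.sum_const, Finset.sum_const, ← Finset.mul_sum]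
          push_cast; ring
      _ = 4 * eIn A P i - 4 * (eIn A P i) ^ 2 / C := by
          rw [T2]
          have h1 : (B.card:ℝ)*((B.card:ℝ) * c) - (B.card:ℝ)*c = 2 * eIn A P i := by
            have : (B.card:ℝ)*((B.card:ℝ) * c) - (B.card:ℝ)*c = (C * 2) * c := by
              rw [hC2]; ring
            rw [this, hcdef, mul_comm C 2, mul_assoc, mul_div_cancel₀ _ (ne_of_gt hCpos)]
          have h2 : eIn A P i * c = (eIn A P i)^2 / C := by
            rw [hcdef, pow_two, mul_div_assoc]
          have h3 : 2*c*(2*eIn A P i) = 4*(eIn A P i * c) := by ring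
          have h4 : 4 * eIn A P i ^ 2 / C = 4 * (eIn A P i ^ 2 / C) := by ring
          linarith [h1, h2, h3, h4]
  · -- degenerate: B.card ≤ 1
    have huv : ∀ u ∈ B, ∀ v ∈ B, u = v := Finset.card_le_one.mp (by omega)
    have hE : eIn A P i = 0 := by
      unfold eIn
      rw [← hB]
      have : ∑ u ∈ B, ∑ v ∈ B, A u v = 0 :=
        Finset.sum_eq_zero fun u hu => Finset.sum_eq_zero fun v hv => by
          rw [← huv u hu v hv]; exact hdiag u
      rw [this]; norm_num
    have hL : ∑ u ∈ B, ∑ v ∈ B, |Abar A P u v - A u v| = 0 :=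
      Finset.sum_eq_zero fun u hu => Finset.sum_eq_zero fun v hv => by
        rw [← huv u hu v hv]
        simp [Abar, hdiag u]
    rw [hL, hE]; simp

lemma offdiag_block (h01 : ∀ u v, A u v = 0 ∨ A u v = 1) {i j : Fin k} (hij : i ≠ j) :
    (∑ u ∈ Finset.univ.filter (fun v => P v = i),
      ∑ v ∈ Finset.univ.filter (fun v => P v = j), |Abar A P u v - A u v|)
    = 2 * eCross A P i j
      - 2 * (eCross A P i j) ^ 2 / ((blockCard P i : ℝ) * (blockCard P j : ℝ)) := by
  set Bi := Finset.univ.filter (fun v => P v = i) with hBi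
  set Bj := Finset.univ.filter (fun v => P v = j) with hBj
  have hni : blockCard P i = Bi.card := rfl
  have hnj : blockCard P j = Bj.card := rfl
  by_cases hz : Bi.card = 0 ∨ Bj.card = 0
  · have hE : eCross A P i j = 0 := by
      unfold eCross
      rcases hz with h | h
      · rw [← hBi, Finset.card_eq_zero.mp h]; simp
      · rw [← hBj, Finset.card_eq_zero.mp h]; simp
    have hL : (∑ u ∈ Bi, ∑ v ∈ Bj, |Abar A P u v - A u v|) = 0 := by
      rcases hz with h | h
      · rw [Finset.card_eq_zero.mp h]; simp
      · rw [Finset.card_eq_zero.mp h]; simp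
    rw [hL, hE]; simp
  · push_neg at hz
    have hNi : (0:ℝ) < (blockCard P i : ℝ) := by
      rw [hni]; exact_mod_cast Nat.pos_of_ne_zero hz.1
    have hNj : (0:ℝ) < (blockCard P j : ℝ) := by
      rw [hnj]; exact_mod_cast Nat.pos_of_ne_zero hz.2
    set N := (blockCard P i : ℝ) * (blockCard P j : ℝ) with hNdef
    have hNpos : 0 < N := mul_pos hNi hNj
    set c := eCross A P i j / N with hcdef
    have hc0 : 0 ≤ c := div_nonneg (eCross_nonneg A P h01 i j) hNpos.le
    have hc1 : c ≤ 1 := by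
      rw [hcdef, div_le_one hNpos]; exact eCross_le A P h01 i j
    have key : ∀ u ∈ Bi, ∀ v ∈ Bj,
        |Abar A P u v - A u v| = A u v + c - 2*c*A u v := by
      intro u hu v hv
      have hu' : P u = i := (Finset.mem_filter.mp hu).2
      have hv' : P v = j := (Finset.mem_filter.mp hv).2
      have huv : u ≠ v := fun h => hij (by rw [← hu', ← hv', h])
      have : Abar A P u v = c := by
        unfold Abar
        rw [if_neg huv, hu', hv', if_neg hij]
      rw [this, myAbs c (A u v) hc0 hc1 (h01 u v)]
    have hE : (∑ u ∈ Bi, ∑ v ∈ Bj, A u v) = eCross A P i j := rfl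
    calc (∑ u ∈ Bi, ∑ v ∈ Bj, |Abar A P u v - A u v|)
        = ∑ u ∈ Bi, ∑ v ∈ Bj, (A u v + c - 2*c*A u v) :=
          Finset.sum_congr rfl fun u hu => Finset.sum_congr rfl fun v hv => key u hu v hv
      _ = (∑ u ∈ Bi, ∑ v ∈ Bj, A u v) + (Bi.card : ℝ) * ((Bj.card:ℝ) * c)
            - 2*c*(∑ u ∈ Bi, ∑ v ∈ Bj, A u v) := by
          have inner : ∀ u ∈ Bi, ∑ v ∈ Bj, (A u v + c - 2*c*A u v)
              = (∑ v ∈ Bj, A u v) + (Bj.card:ℝ)*c - 2*c*(∑ v ∈ Bj, A u v) := by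
            intro u _
            rw [Finset.sum_sub_distrib, Finset.sum_add_distrib, Finset.sum_const,
              ← Finset.mul_sum]
            simp
          rw [Finset.sum_congr rfl inner, Finset.sum_sub_distrib, Finset.sum_add_distrib,
            Finset.sum_const, ← Finset.mul_sum]
          push_cast
          ring
      _ = 2 * eCross A P i j - 2 * (eCross A P i j) ^ 2 / N := by
          rw [hE]
          have h1 : (Bi.card : ℝ) * ((Bj.card:ℝ) * c) = eCross A P i j := by
            rw [← mul_assoc, ← hni, ← hnj, ← hNdef, hcdef,
              mul_div_cancel₀ _ (ne_of_gt hNpos)]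
          have h2 : eCross A P i j * c = (eCross A P i j)^2 / N := by
            rw [hcdef, pow_two, mul_div_assoc]
          have h3 : 2*c*(eCross A P i j) = 2*(eCross A P i j * c) := by ring
          have h4 : 2 * eCross A P i j ^ 2 / N = 2 * (eCross A P i j ^2 / N) := by ring
          linarith [h1, h2, h3, h4]

lemma fiber_decomp (f : V → V → ℝ) :
    (∑ u : V, ∑ v : V, f u v)
    = ∑ i : Fin k, ∑ j : Fin k, ∑ u ∈ Finset.univ.filter (fun v => P v = i),
        ∑ v ∈ Finset.univ.filter (fun v => P v = j), f u v := by
  calc (∑ u : V, ∑ v : V, f u v)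
      = ∑ i : Fin k, ∑ u ∈ Finset.univ.filter (fun v => P v = i), ∑ v : V, f u v :=
        (Finset.sum_fiberwise Finset.univ P _).symm
    _ = ∑ i : Fin k, ∑ u ∈ Finset.univ.filter (fun v => P v = i),
          ∑ j : Fin k, ∑ v ∈ Finset.univ.filter (fun v => P v = j), f u v :=
        Finset.sum_congr rfl fun i _ => Finset.sum_congr rfl fun u _ =>
          (Finset.sum_fiberwise Finset.univ P _).symm
    _ = _ := Finset.sum_congr rfl fun i _ => Finset.sum_comm

lemma RE_formula (h01 : ∀ u v, A u v = 0 ∨ A u v = 1) (hdiag : ∀ u, A u u = 0) :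
    RE A P = (∑ i : Fin k,
        (4 * eIn A P i - 4 * (eIn A P i) ^ 2 / ((blockCard P i).choose 2 : ℝ)))
      + ∑ i : Fin k, ∑ j ∈ Finset.univ.erase i,
          (2 * eCross A P i j
            - 2 * (eCross A P i j) ^ 2 / ((blockCard P i : ℝ) * (blockCard P j : ℝ))) := by
  unfold RE
  rw [fiber_decomp P (fun u v => |Abar A P u v - A u v|)]
  have h2 : ∀ i : Fin k, (∑ j : Fin k, ∑ u ∈ Finset.univ.filter (fun v => P v = i),
      ∑ v ∈ Finset.univ.filter (fun v => P v = j), |Abar A P u v - A u v|)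
      = (4 * eIn A P i - 4 * (eIn A P i) ^ 2 / ((blockCard P i).choose 2 : ℝ))
        + ∑ j ∈ Finset.univ.erase i,
          (2 * eCross A P i j
            - 2 * (eCross A P i j) ^ 2 / ((blockCard P i : ℝ) * (blockCard P j : ℝ))) := by
    intro i
    rw [← Finset.add_sum_erase Finset.univ _ (Finset.mem_univ i), diag_block A P h01 hdiag i]
    congr 1
    refine Finset.sum_congr rfl fun j hj => ?_
    exact offdiag_block A P h01 (Ne.symm (Finset.mem_erase.mp hj).1)
  rw [Finset.sum_congr rfl fun i _ => h2 i, Finset.sum_add_distrib]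

lemma lin_eq :
    ((∑ i : Fin k, 4 * eIn A P i)
      + ∑ i : Fin k, ∑ j ∈ Finset.univ.erase i, 2 * eCross A P i j)
    = 2 * (∑ u : V, ∑ v : V, A u v) := by
  rw [fiber_decomp P A, Finset.mul_sum]
  rw [← Finset.sum_add_distrib]
  refine Finset.sum_congr rfl fun i _ => ?_
  rw [Finset.mul_sum, ← Finset.add_sum_erase Finset.univ _ (Finset.mem_univ i),
    sum_block_A A P i]
  congr 1
  ring

lemma RE_split (h01 : ∀ u v, A u v = 0 ∨ A u v = 1) (hdiag : ∀ u, A u u = 0) :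
    RE A P = 2 * (∑ u : V, ∑ v : V, A u v)
      - ((∑ i : Fin k, 4 * (eIn A P i) ^ 2 / ((blockCard P i).choose 2 : ℝ))
        + ∑ i : Fin k, ∑ j ∈ Finset.univ.erase i,
            2 * (eCross A P i j) ^ 2 / ((blockCard P i : ℝ) * (blockCard P j : ℝ))) := by
  rw [RE_formula A P h01 hdiag, ← lin_eq A P]
  rw [Finset.sum_sub_distrib]
  have : ∀ i : Fin k, (∑ j ∈ Finset.univ.erase i,
      (2 * eCross A P i j
        - 2 * (eCross A P i j) ^ 2 / ((blockCard P i : ℝ) * (blockCard P j : ℝ))))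
      = (∑ j ∈ Finset.univ.erase i, 2 * eCross A P i j)
        - ∑ j ∈ Finset.univ.erase i,
            2 * (eCross A P i j) ^ 2 / ((blockCard P i : ℝ) * (blockCard P j : ℝ)) :=
    fun i => Finset.sum_sub_distrib _ _
  rw [Finset.sum_congr rfl fun i _ => this i, Finset.sum_sub_distrib]
  ring

section merge
variable {a b : Fin k} (hab : a ≠ b)
include hab

lemma BQ_a : Finset.univ.filter (fun v => (if P v = b then a else P v) = a)
    = Finset.univ.filter (fun v => P v = a) ∪ Finset.univ.filter (fun v => P v = b) := by
  ext v
  by_cases h : P v = b <;> simp [h, hab, Ne.symm hab]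

lemma BQ_b : Finset.univ.filter (fun v => (if P v = b then a else P v) = b) = ∅ := by
  ext v
  by_cases h : P v = b <;> simp [h, hab, Ne.symm hab]

lemma BQ_i {i : Fin k} (hia : i ≠ a) (hib : i ≠ b) :
    Finset.univ.filter (fun v => (if P v = b then a else P v) = i)
    = Finset.univ.filter (fun v => P v = i) := by
  ext v
  by_cases h : P v = b <;> simp [h, hia.symm, hib.symm, Ne.symm hia]

lemma disjAB : Disjoint (Finset.univ.filter (fun v => P v = a))
    (Finset.univ.filter (fun v => P v = b)) := by
  rw [Finset.disjoint_filter]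
  intro v _ h1 h2
  exact hab (h1 ▸ h2 ▸ rfl)

lemma card_Q_a : blockCard (fun v => if P v = b then a else P v) a
    = blockCard P a + blockCard P b := by
  unfold blockCard
  rw [BQ_a P hab, Finset.card_union_of_disjoint (disjAB P hab)]

lemma card_Q_b : blockCard (fun v => if P v = b then a else P v) b = 0 := by
  unfold blockCard
  rw [BQ_b P hab]
  rfl

lemma card_Q_i {i : Fin k} (hia : i ≠ a) (hib : i ≠ b) :
    blockCard (fun v => if P v = b then a else P v) i = blockCard P i := by
  unfold blockCard
  rw [BQ_i P hab hia hib]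

lemma eIn_Q_a (hsym : ∀ u v, A u v = A v u) :
    eIn A (fun v => if P v = b then a else P v) a
    = eIn A P a + eIn A P b + eCross A P a b := by
  unfold eIn
  rw [BQ_a P hab, Finset.sum_union (disjAB P hab)]
  have h1 : ∀ u : V, (∑ v ∈ Finset.univ.filter (fun v => P v = a) ∪
      Finset.univ.filter (fun v => P v = b), A u v)
      = (∑ v ∈ Finset.univ.filter (fun v => P v = a), A u v)
        + ∑ v ∈ Finset.univ.filter (fun v => P v = b), A u v :=
    fun u => Finset.sum_union (disjAB P hab)
  rw [Finset.sum_congr rfl fun u _ => h1 u, Finset.sum_congr rfl fun u _ => h1 u,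
    Finset.sum_add_distrib, Finset.sum_add_distrib]
  have hba : (∑ u ∈ Finset.univ.filter (fun v => P v = b),
      ∑ v ∈ Finset.univ.filter (fun v => P v = a), A u v) = eCross A P a b := by
    rw [show (∑ u ∈ Finset.univ.filter (fun v => P v = b),
      ∑ v ∈ Finset.univ.filter (fun v => P v = a), A u v) = eCross A P b a from rfl]
    exact (eCross_symm A P hsym a b).symm
  rw [hba]
  rw [show (∑ u ∈ Finset.univ.filter (fun v => P v = a),
      ∑ v ∈ Finset.univ.filter (fun v => P v = b), A u v) = eCross A P a b from rfl]
  unfold eCross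
  ring

lemma eIn_Q_b : eIn A (fun v => if P v = b then a else P v) b = 0 := by
  unfold eIn
  rw [BQ_b P hab]
  simp

lemma eIn_Q_i {i : Fin k} (hia : i ≠ a) (hib : i ≠ b) :
    eIn A (fun v => if P v = b then a else P v) i = eIn A P i := by
  unfold eIn
  rw [BQ_i P hab hia hib]

lemma eCross_Q_a_i {i : Fin k} (hia : i ≠ a) (hib : i ≠ b) :
    eCross A (fun v => if P v = b then a else P v) a i
    = eCross A P a i + eCross A P b i := by
  unfold eCross
  rw [BQ_a P hab, BQ_i P hab hia hib, Finset.sum_union (disjAB P hab)]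

lemma eCross_Q_i_a {i : Fin k} (hia : i ≠ a) (hib : i ≠ b) :
    eCross A (fun v => if P v = b then a else P v) i a
    = eCross A P i a + eCross A P i b := by
  unfold eCross
  rw [BQ_a P hab, BQ_i P hab hia hib, ← Finset.sum_add_distrib]
  exact Finset.sum_congr rfl fun u _ => Finset.sum_union (disjAB P hab)

lemma eCross_Q_b_x (x : Fin k) :
    eCross A (fun v => if P v = b then a else P v) b x = 0 := by
  unfold eCross
  rw [BQ_b P hab]
  simp

lemma eCross_Q_x_b (x : Fin k) :
    eCross A (fun v => if P v = b then a else P v) x b = 0 := by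
  unfold eCross
  rw [BQ_b P hab]
  simp

lemma eCross_Q_i_j {i j : Fin k} (hia : i ≠ a) (hib : i ≠ b) (hja : j ≠ a) (hjb : j ≠ b) :
    eCross A (fun v => if P v = b then a else P v) i j = eCross A P i j := by
  unfold eCross
  rw [BQ_i P hab hia hib, BQ_i P hab hja hjb]

end merge

lemma D_split {k : ℕ} {a b : Fin k} (hab : a ≠ b) (f : Fin k → ℝ) :
    (∑ i : Fin k, f i)
    = f a + f b + ∑ i ∈ (Finset.univ.erase a).erase b, f i := by
  have hbA : b ∈ Finset.univ.erase a := Finset.mem_erase.mpr ⟨Ne.symm hab, Finset.mem_univ b⟩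
  rw [← Finset.add_sum_erase _ f (Finset.mem_univ a), ← Finset.add_sum_erase _ f hbA]
  ring

lemma X_split {k : ℕ} {a b : Fin k} (hab : a ≠ b) (g : Fin k → Fin k → ℝ) :
    (∑ i : Fin k, ∑ j ∈ Finset.univ.erase i, g i j)
    = g a b + g b a
      + (∑ j ∈ (Finset.univ.erase a).erase b, (g a j + g b j + g j a + g j b))
      + ∑ i ∈ (Finset.univ.erase a).erase b,
          ∑ j ∈ ((Finset.univ.erase a).erase b).erase i, g i j := by
  have hbA : b ∈ Finset.univ.erase a := Finset.mem_erase.mpr ⟨Ne.symm hab, Finset.mem_univ b⟩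
  have haB : a ∈ Finset.univ.erase b := Finset.mem_erase.mpr ⟨hab, Finset.mem_univ a⟩
  rw [D_split hab (fun i => ∑ j ∈ Finset.univ.erase i, g i j)]
  rw [← Finset.add_sum_erase _ (g a) hbA]
  rw [← Finset.add_sum_erase _ (g b) haB]
  rw [show (Finset.univ.erase b).erase a = (Finset.univ.erase a).erase b from
    Finset.erase_right_comm]
  have inner : ∀ i ∈ (Finset.univ.erase a).erase b,
      (∑ j ∈ Finset.univ.erase i, g i j)
      = g i a + g i b + ∑ j ∈ ((Finset.univ.erase a).erase b).erase i, g i j := by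
    intro i hi
    obtain ⟨hib, hia⟩ := Finset.mem_erase.mp hi
    have hia' : i ≠ a := (Finset.mem_erase.mp hia).1
    have hai : a ∈ Finset.univ.erase i := Finset.mem_erase.mpr ⟨Ne.symm hia', Finset.mem_univ a⟩
    have hbi : b ∈ (Finset.univ.erase i).erase a :=
      Finset.mem_erase.mpr ⟨Ne.symm hab, Finset.mem_erase.mpr ⟨Ne.symm hib, Finset.mem_univ b⟩⟩
    rw [← Finset.add_sum_erase _ (g i) hai, ← Finset.add_sum_erase _ (g i) hbi]
    have hset : ((Finset.univ.erase i).erase a).erase b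
        = ((Finset.univ.erase a).erase b).erase i := by
      ext x; simp only [Finset.mem_erase, Finset.mem_univ, and_true]; tauto
    rw [hset]
    ring
  rw [Finset.sum_congr rfl inner]
  rw [Finset.sum_add_distrib, Finset.sum_add_distrib]
  rw [Finset.sum_add_distrib, Finset.sum_add_distrib, Finset.sum_add_distrib]
  ring

end

/-- The closed form for the score
`score(a,b) = RE(G|S) − RE(G|S^{a,b})` of merging blocks `a ≠ b`
(terms `e²/C(m,2)` with `C(m,2) = 0` are interpreted as `0`, which is Lean's convention
for division by zero). -/
theorem score_closed_form {V : Type*} [Fintype V] [DecidableEq V] {k : ℕ}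
    (A : V → V → ℝ) (P : V → Fin k) (a b : Fin k)
    (hsym : ∀ u v, A u v = A v u)
    (h01 : ∀ u v, A u v = 0 ∨ A u v = 1)
    (hdiag : ∀ u, A u u = 0)
    (hab : a ≠ b)
    (hna : 1 ≤ blockCard P a) (hnb : 1 ≤ blockCard P b)
    (hnab : 2 ≤ blockCard P a + blockCard P b)
    (hnd : ∀ i : Fin k, eIn A P i ≠ 0 → 2 ≤ blockCard P i) :
    RE A P - RE A (fun v => if P v = b then a else P v) =
      - (4 * (eIn A P a) ^ 2 / ((blockCard P a).choose 2 : ℝ))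
      - (∑ i ∈ Finset.univ.erase a,
          4 * (eCross A P a i) ^ 2 / ((blockCard P a : ℝ) * (blockCard P i : ℝ)))
      + 4 * (eCross A P a b) ^ 2 / ((blockCard P a : ℝ) * (blockCard P b : ℝ))
      - 4 * (eIn A P b) ^ 2 / ((blockCard P b).choose 2 : ℝ)
      - (∑ i ∈ Finset.univ.erase b,
          4 * (eCross A P b i) ^ 2 / ((blockCard P b : ℝ) * (blockCard P i : ℝ)))
      + 4 * (eIn A P a + eIn A P b + eCross A P a b) ^ 2
          / (((blockCard P a + blockCard P b).choose 2 : ℝ))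
      + 4 / ((blockCard P a : ℝ) + (blockCard P b : ℝ)) *
          ∑ i ∈ (Finset.univ.erase a).erase b,
            ((eCross A P a i) ^ 2 / (blockCard P i : ℝ)
              + (eCross A P b i) ^ 2 / (blockCard P i : ℝ)
              + 2 * eCross A P a i * eCross A P b i / (blockCard P i : ℝ)) := by
  have hbA : b ∈ Finset.univ.erase a :=
    Finset.mem_erase.mpr ⟨Ne.symm hab, Finset.mem_univ b⟩
  have haB : a ∈ Finset.univ.erase b :=
    Finset.mem_erase.mpr ⟨hab, Finset.mem_univ a⟩
  have hscore : RE A P - RE A (fun v => if P v = b then a else P v) =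
      ((∑ i : Fin k, 4 * (eIn A (fun v => if P v = b then a else P v) i) ^ 2
          / ((blockCard (fun v => if P v = b then a else P v) i).choose 2 : ℝ))
        + ∑ i : Fin k, ∑ j ∈ Finset.univ.erase i,
            2 * (eCross A (fun v => if P v = b then a else P v) i j) ^ 2
              / ((blockCard (fun v => if P v = b then a else P v) i : ℝ)
                  * (blockCard (fun v => if P v = b then a else P v) j : ℝ)))
      - ((∑ i : Fin k, 4 * (eIn A P i) ^ 2 / ((blockCard P i).choose 2 : ℝ))
        + ∑ i : Fin k, ∑ j ∈ Finset.univ.erase i,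
            2 * (eCross A P i j) ^ 2 / ((blockCard P i : ℝ) * (blockCard P j : ℝ))) := by
    rw [RE_split A P h01 hdiag, RE_split A (fun v => if P v = b then a else P v) h01 hdiag]
    ring
  have hDQ : (∑ i : Fin k, 4 * (eIn A (fun v => if P v = b then a else P v) i) ^ 2
        / ((blockCard (fun v => if P v = b then a else P v) i).choose 2 : ℝ))
      = 4 * (eIn A P a + eIn A P b + eCross A P a b) ^ 2
          / (((blockCard P a + blockCard P b).choose 2 : ℝ))
        + ∑ i ∈ (Finset.univ.erase a).erase b,
            4 * (eIn A P i) ^ 2 / ((blockCard P i).choose 2 : ℝ) := by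
    rw [D_split hab (fun i => 4 * (eIn A (fun v => if P v = b then a else P v) i) ^ 2
        / ((blockCard (fun v => if P v = b then a else P v) i).choose 2 : ℝ))]
    rw [eIn_Q_a A P hab hsym, eIn_Q_b A P hab, card_Q_a P hab]
    have hrest : ∀ i ∈ (Finset.univ.erase a).erase b,
        4 * (eIn A (fun v => if P v = b then a else P v) i) ^ 2
          / ((blockCard (fun v => if P v = b then a else P v) i).choose 2 : ℝ)
        = 4 * (eIn A P i) ^ 2 / ((blockCard P i).choose 2 : ℝ) := by
      intro i hi
      obtain ⟨hib, hia⟩ := Finset.mem_erase.mp hi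
      rw [eIn_Q_i A P hab (Finset.mem_erase.mp hia).1 hib,
        card_Q_i P hab (Finset.mem_erase.mp hia).1 hib]
    rw [Finset.sum_congr rfl hrest]
    norm_num
  have hXQ : (∑ i : Fin k, ∑ j ∈ Finset.univ.erase i,
        2 * (eCross A (fun v => if P v = b then a else P v) i j) ^ 2
          / ((blockCard (fun v => if P v = b then a else P v) i : ℝ)
              * (blockCard (fun v => if P v = b then a else P v) j : ℝ)))
      = (∑ j ∈ (Finset.univ.erase a).erase b,
          4 * (eCross A P a j + eCross A P b j) ^ 2
            / (((blockCard P a : ℝ) + (blockCard P b : ℝ)) * (blockCard P j : ℝ)))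
        + ∑ i ∈ (Finset.univ.erase a).erase b,
            ∑ j ∈ ((Finset.univ.erase a).erase b).erase i,
              2 * (eCross A P i j) ^ 2 / ((blockCard P i : ℝ) * (blockCard P j : ℝ)) := by
    rw [X_split hab (fun i j =>
        2 * (eCross A (fun v => if P v = b then a else P v) i j) ^ 2
          / ((blockCard (fun v => if P v = b then a else P v) i : ℝ)
              * (blockCard (fun v => if P v = b then a else P v) j : ℝ)))]
    rw [eCross_Q_x_b A P hab a, eCross_Q_b_x A P hab a]
    have hrow : ∀ j ∈ (Finset.univ.erase a).erase b,
        (2 * (eCross A (fun v => if P v = b then a else P v) a j) ^ 2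
          / ((blockCard (fun v => if P v = b then a else P v) a : ℝ)
              * (blockCard (fun v => if P v = b then a else P v) j : ℝ))
        + 2 * (eCross A (fun v => if P v = b then a else P v) b j) ^ 2
          / ((blockCard (fun v => if P v = b then a else P v) b : ℝ)
              * (blockCard (fun v => if P v = b then a else P v) j : ℝ))
        + 2 * (eCross A (fun v => if P v = b then a else P v) j a) ^ 2
          / ((blockCard (fun v => if P v = b then a else P v) j : ℝ)
              * (blockCard (fun v => if P v = b then a else P v) a : ℝ))
        + 2 * (eCross A (fun v => if P v = b then a else P v) j b) ^ 2
          / ((blockCard (fun v => if P v = b then a else P v) j : ℝ)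
              * (blockCard (fun v => if P v = b then a else P v) b : ℝ)))
        = 4 * (eCross A P a j + eCross A P b j) ^ 2
            / (((blockCard P a : ℝ) + (blockCard P b : ℝ)) * (blockCard P j : ℝ)) := by
      intro j hj
      obtain ⟨hjb, hja'⟩ := Finset.mem_erase.mp hj
      have hja : j ≠ a := (Finset.mem_erase.mp hja').1
      rw [eCross_Q_a_i A P hab hja hjb, eCross_Q_i_a A P hab hja hjb,
        eCross_Q_b_x A P hab j, eCross_Q_x_b A P hab j,
        card_Q_a P hab, card_Q_i P hab hja hjb,
        eCross_symm A P hsym j a, eCross_symm A P hsym j b]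
      push_cast
      ring
    have hdbl : ∀ i ∈ (Finset.univ.erase a).erase b,
        (∑ j ∈ ((Finset.univ.erase a).erase b).erase i,
          2 * (eCross A (fun v => if P v = b then a else P v) i j) ^ 2
            / ((blockCard (fun v => if P v = b then a else P v) i : ℝ)
                * (blockCard (fun v => if P v = b then a else P v) j : ℝ)))
        = ∑ j ∈ ((Finset.univ.erase a).erase b).erase i,
            2 * (eCross A P i j) ^ 2 / ((blockCard P i : ℝ) * (blockCard P j : ℝ)) := by
      intro i hi
      obtain ⟨hib, hia'⟩ := Finset.mem_erase.mp hi
      have hia : i ≠ a := (Finset.mem_erase.mp hia').1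
      refine Finset.sum_congr rfl fun j hj => ?_
      have hj' := Finset.mem_erase.mp hj
      obtain ⟨hjb, hja'⟩ := Finset.mem_erase.mp hj'.2
      have hja : j ≠ a := (Finset.mem_erase.mp hja').1
      rw [eCross_Q_i_j A P hab hia hib hja hjb, card_Q_i P hab hia hib,
        card_Q_i P hab hja hjb]
    rw [Finset.sum_congr rfl hrow, Finset.sum_congr rfl hdbl]
    ring
  have hXP : (∑ i : Fin k, ∑ j ∈ Finset.univ.erase i,
        2 * (eCross A P i j) ^ 2 / ((blockCard P i : ℝ) * (blockCard P j : ℝ)))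
      = 4 * (eCross A P a b) ^ 2 / ((blockCard P a : ℝ) * (blockCard P b : ℝ))
        + (∑ j ∈ (Finset.univ.erase a).erase b,
            (4 * (eCross A P a j) ^ 2 / ((blockCard P a : ℝ) * (blockCard P j : ℝ))
              + 4 * (eCross A P b j) ^ 2 / ((blockCard P b : ℝ) * (blockCard P j : ℝ))))
        + ∑ i ∈ (Finset.univ.erase a).erase b,
            ∑ j ∈ ((Finset.univ.erase a).erase b).erase i,
              2 * (eCross A P i j) ^ 2 / ((blockCard P i : ℝ) * (blockCard P j : ℝ)) := by
    rw [X_split hab (fun i j =>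
        2 * (eCross A P i j) ^ 2 / ((blockCard P i : ℝ) * (blockCard P j : ℝ)))]
    have hrow : ∀ j ∈ (Finset.univ.erase a).erase b,
        (2 * (eCross A P a j) ^ 2 / ((blockCard P a : ℝ) * (blockCard P j : ℝ))
          + 2 * (eCross A P b j) ^ 2 / ((blockCard P b : ℝ) * (blockCard P j : ℝ))
          + 2 * (eCross A P j a) ^ 2 / ((blockCard P j : ℝ) * (blockCard P a : ℝ))
          + 2 * (eCross A P j b) ^ 2 / ((blockCard P j : ℝ) * (blockCard P b : ℝ)))
        = 4 * (eCross A P a j) ^ 2 / ((blockCard P a : ℝ) * (blockCard P j : ℝ))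
          + 4 * (eCross A P b j) ^ 2 / ((blockCard P b : ℝ) * (blockCard P j : ℝ)) := by
      intro j hj
      rw [eCross_symm A P hsym j a, eCross_symm A P hsym j b]
      ring
    rw [Finset.sum_congr rfl hrow, eCross_symm A P hsym b a]
    ring
  have hDP : (∑ i : Fin k, 4 * (eIn A P i) ^ 2 / ((blockCard P i).choose 2 : ℝ))
      = 4 * (eIn A P a) ^ 2 / ((blockCard P a).choose 2 : ℝ)
        + 4 * (eIn A P b) ^ 2 / ((blockCard P b).choose 2 : ℝ)
        + ∑ i ∈ (Finset.univ.erase a).erase b,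
            4 * (eIn A P i) ^ 2 / ((blockCard P i).choose 2 : ℝ) :=
    D_split hab _
  have hRa : (∑ i ∈ Finset.univ.erase a,
        4 * (eCross A P a i) ^ 2 / ((blockCard P a : ℝ) * (blockCard P i : ℝ)))
      = 4 * (eCross A P a b) ^ 2 / ((blockCard P a : ℝ) * (blockCard P b : ℝ))
        + ∑ i ∈ (Finset.univ.erase a).erase b,
            4 * (eCross A P a i) ^ 2 / ((blockCard P a : ℝ) * (blockCard P i : ℝ)) :=
    (Finset.add_sum_erase _ _ hbA).symm
  have hRb : (∑ i ∈ Finset.univ.erase b,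
        4 * (eCross A P b i) ^ 2 / ((blockCard P b : ℝ) * (blockCard P i : ℝ)))
      = 4 * (eCross A P a b) ^ 2 / ((blockCard P a : ℝ) * (blockCard P b : ℝ))
        + ∑ i ∈ (Finset.univ.erase a).erase b,
            4 * (eCross A P b i) ^ 2 / ((blockCard P b : ℝ) * (blockCard P i : ℝ)) := by
    rw [← Finset.add_sum_erase _ _ haB,
      show (Finset.univ.erase b).erase a = (Finset.univ.erase a).erase b from
        Finset.erase_right_comm,
      eCross_symm A P hsym b a]
    ring
  have hlast : (∑ j ∈ (Finset.univ.erase a).erase b,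
        4 * (eCross A P a j + eCross A P b j) ^ 2
          / (((blockCard P a : ℝ) + (blockCard P b : ℝ)) * (blockCard P j : ℝ)))
      = 4 / ((blockCard P a : ℝ) + (blockCard P b : ℝ)) *
          ∑ i ∈ (Finset.univ.erase a).erase b,
            ((eCross A P a i) ^ 2 / (blockCard P i : ℝ)
              + (eCross A P b i) ^ 2 / (blockCard P i : ℝ)
              + 2 * eCross A P a i * eCross A P b i / (blockCard P i : ℝ)) := by
    rw [Finset.mul_sum]
    refine Finset.sum_congr rfl fun j hj => ?_
    rw [← add_div, ← add_div, div_mul_div_comm]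
    rw [show (eCross A P a j) ^ 2 + (eCross A P b j) ^ 2
        + 2 * eCross A P a j * eCross A P b j
        = (eCross A P a j + eCross A P b j) ^ 2 from by ring]
  have hsum2 : (∑ j ∈ (Finset.univ.erase a).erase b,
        (4 * (eCross A P a j) ^ 2 / ((blockCard P a : ℝ) * (blockCard P j : ℝ))
          + 4 * (eCross A P b j) ^ 2 / ((blockCard P b : ℝ) * (blockCard P j : ℝ))))
      = (∑ j ∈ (Finset.univ.erase a).erase b,
          4 * (eCross A P a j) ^ 2 / ((blockCard P a : ℝ) * (blockCard P j : ℝ)))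
        + ∑ j ∈ (Finset.univ.erase a).erase b,
          4 * (eCross A P b j) ^ 2 / ((blockCard P b : ℝ) * (blockCard P j : ℝ)) :=
    Finset.sum_add_distrib
  rw [hscore, hDQ, hXQ, hDP, hXP, hRa, hRb, hsum2, ← hlast]
  ring
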